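/- Fix a field F, n ≥ 1, functions m, p : [n] → ℕ, and construction matrices M_{i,j} ∈ F^{p_j × m_i} for i, j ∈ [n]. Let E ⊆ [n] with complement Ē = [n]∖E, and suppose the code is reconstructible from Ē. Then: (i) for every i ∈ E, Σ_{j∈Ē} rank(M_{i,j}) ≥ m_i; and (ii) Σ_{i∈E} m_i ≤ Σ_{j∈Ē} min( p_j , Σ_{i∈E} rank(M_{i,j}) ). -/

import Mathlib

open Module LinearMap

/-- Codimension counting: the codimension of a finite intersection of kernels is at most
the sum of the ranks. -/
lemma aux_inf {F V : Type*} [Field F] [AddCommGroup V] [Module F V] [FiniteDimensional F V]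
    {ι : Type*} {W : ι → Type*} [∀ i, AddCommGroup (W i)] [∀ i, Module F (W i)]
    (f : ∀ i, V →ₗ[F] W i) (s : Finset ι) :
    Module.finrank F V ≤
      Module.finrank F (⨅ i ∈ s, LinearMap.ker (f i) : Submodule F V)
        + ∑ i ∈ s, Module.finrank F (LinearMap.range (f i)) := by
  classical
  induction s using Finset.induction with
  | empty =>
    rw [show (⨅ i ∈ (∅ : Finset ι), LinearMap.ker (f i) : Submodule F V) = ⊤ from by simp,
      finrank_top]
    simp
  | @insert a s ha ih =>
    rw [Finset.sum_insert ha]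
    have hins : (⨅ i ∈ insert a s, LinearMap.ker (f i) : Submodule F V)
        = LinearMap.ker (f a) ⊓ ⨅ i ∈ s, LinearMap.ker (f i) :=
      Finset.iInf_insert a s fun i => LinearMap.ker (f i)
    rw [hins]
    have h1 := Submodule.finrank_sup_add_finrank_inf_eq (LinearMap.ker (f a))
      (⨅ i ∈ s, LinearMap.ker (f i) : Submodule F V)
    have h2 : Module.finrank F
        ↥(LinearMap.ker (f a) ⊔ (⨅ i ∈ s, LinearMap.ker (f i) : Submodule F V))
        ≤ Module.finrank F V := Submodule.finrank_le _
    have h3 := LinearMap.finrank_range_add_finrank_ker (f a)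
    omega

/-- If a finite family of linear maps has trivial common kernel, the dimension of the
domain is at most the sum of the ranks. -/
lemma aux_inj {F V : Type*} [Field F] [AddCommGroup V] [Module F V] [FiniteDimensional F V]
    {ι : Type*} [Fintype ι] {W : ι → Type*} [∀ i, AddCommGroup (W i)] [∀ i, Module F (W i)]
    (f : ∀ i, V →ₗ[F] W i) (h : ∀ v : V, (∀ i, f i v = 0) → v = 0) :
    Module.finrank F V ≤ ∑ i, Module.finrank F (LinearMap.range (f i)) := by
  have hbot : (⨅ i ∈ Finset.univ, LinearMap.ker (f i) : Submodule F V) = ⊥ := by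
    rw [eq_bot_iff]
    intro v hv
    simp only [Finset.mem_univ, iInf_true, Submodule.mem_iInf, LinearMap.mem_ker] at hv
    simpa using h v hv
  have := aux_inf f Finset.univ
  rw [hbot] at this
  simpa using this

/-- The rank of a finite sum of linear maps is at most the sum of the ranks. -/
lemma aux_sum {F V W : Type*} [Field F] [AddCommGroup V] [Module F V]
    [AddCommGroup W] [Module F W] [FiniteDimensional F W]
    {ι : Type*} (s : Finset ι) (g : ι → (V →ₗ[F] W)) :
    Module.finrank F (LinearMap.range (∑ i ∈ s, g i)) ≤
      ∑ i ∈ s, Module.finrank F (LinearMap.range (g i)) := by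
  classical
  induction s using Finset.induction with
  | empty =>
    simp
    exact Submodule.finrank_eq_zero.mpr (LinearMap.range_eq_bot.mpr rfl)
  | @insert a s ha ih =>
    rw [Finset.sum_insert ha, Finset.sum_insert ha]
    have h1 : LinearMap.range (g a + ∑ i ∈ s, g i) ≤
        LinearMap.range (g a) ⊔ LinearMap.range (∑ i ∈ s, g i) := by
      rintro _ ⟨v, rfl⟩
      exact Submodule.add_mem_sup (LinearMap.mem_range_self _ v) (LinearMap.mem_range_self _ v)
    calc Module.finrank F (LinearMap.range (g a + ∑ i ∈ s, g i))
        ≤ Module.finrank F ↥(LinearMap.range (g a) ⊔ LinearMap.range (∑ i ∈ s, g i)) :=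
          Submodule.finrank_mono h1
      _ ≤ Module.finrank F (LinearMap.range (g a))
            + Module.finrank F (LinearMap.range (∑ i ∈ s, g i)) :=
          Submodule.finrank_add_le_finrank_add_finrank _ _
      _ ≤ _ := by omega

/-- Rank bound for a sum of maps precomposed with projections. -/
lemma aux_pi {F : Type*} [Field F] {ι : Type*} [Fintype ι]
    {V : ι → Type*} [∀ i, AddCommGroup (V i)] [∀ i, Module F (V i)]
    {W : Type*} [AddCommGroup W] [Module F W] [FiniteDimensional F W]
    (g : ∀ i, V i →ₗ[F] W) (r : ι → ℕ)
    (hr : ∀ i, Module.finrank F (LinearMap.range (g i)) ≤ r i) :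
    Module.finrank F (LinearMap.range (∑ i, (g i).comp (LinearMap.proj i))) ≤ ∑ i, r i :=
  (aux_sum Finset.univ _).trans (Finset.sum_le_sum fun i _ =>
    (Submodule.finrank_mono (LinearMap.range_comp_le_range _ _)).trans (hr i))

set_option maxHeartbeats 1000000 in
/-- Necessary conditions (x26) and (x27) for an irregular array code: if the code
with construction matrices `M i j` is reconstructible from the complement of `E`,
then (i) `∑_{j ∉ E} rank (M i j) ≥ m i` for every `i ∈ E`, and
(ii) `∑_{i ∈ E} m i ≤ ∑_{j ∉ E} min (p j) (∑ i ∈ E, rank (M i j))`. -/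
theorem stmt5 {F : Type*} [Field F] (n : ℕ) (hn : 1 ≤ n) (m p : Fin n → ℕ)
    (M : ∀ i j : Fin n, Matrix (Fin (p j)) (Fin (m i)) F)
    (E : Finset (Fin n))
    (hrec : Function.Injective fun x : (i : Fin n) → Fin (m i) → F =>
      ((fun j : {j : Fin n // j ∈ Eᶜ} => x j.1),
       (fun j : {j : Fin n // j ∈ Eᶜ} => ∑ i, (M i j.1).mulVec (x i)))) :
    (∀ i ∈ E, m i ≤ ∑ j ∈ Eᶜ, (M i j).rank) ∧
    (∑ i ∈ E, m i ≤ ∑ j ∈ Eᶜ, min (p j) (∑ i ∈ E, (M i j).rank)) := by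
  classical
  constructor
  · -- part (i)
    intro i hi
    set f : ∀ j : {j : Fin n // j ∈ Eᶜ}, (Fin (m i) → F) →ₗ[F] (Fin (p j.1) → F) :=
      fun j => (M i j.1).mulVecLin with hf
    have hker : ∀ v : Fin (m i) → F, (∀ j, f j v = 0) → v = 0 := by
      intro v hv
      set x : (i' : Fin n) → Fin (m i') → F :=
        Function.update (0 : (i' : Fin n) → Fin (m i') → F) i v with hx
      have hx0 : x = 0 := by
        apply hrec
        refine Prod.ext ?_ ?_
        · funext j
          have hne : j.1 ≠ i := by
            intro h
            have h2 := Finset.mem_compl.mp j.2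
            exact h2 (h ▸ hi)
          show x j.1 = (0 : (i' : Fin n) → Fin (m i') → F) j.1
          rw [hx, Function.update_of_ne hne]
        · funext j
          show (∑ i', (M i' j.1).mulVec (x i'))
              = ∑ i', (M i' j.1).mulVec ((0 : (i' : Fin n) → Fin (m i') → F) i')
          have hL : ∑ i', (M i' j.1).mulVec (x i') = (M i j.1).mulVec v := by
            rw [Finset.sum_eq_single i]
            · simp [hx]
            · intro i' _ hne
              simp [hx, Function.update_of_ne hne]
            · simp
          have hR : (∑ i', (M i' j.1).mulVec ((0 : (i' : Fin n) → Fin (m i') → F) i')) = 0 := by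
            simp
          rw [hL, hR]
          simpa [hf] using hv j
      have : x i = 0 := by rw [hx0]; rfl
      simpa [hx] using this
    have key := aux_inj f hker
    have hdom : Module.finrank F (Fin (m i) → F) = m i := Module.finrank_fin_fun F
    rw [hdom] at key
    calc m i ≤ ∑ j : {j : Fin n // j ∈ Eᶜ}, Module.finrank F (LinearMap.range (f j)) := key
      _ = ∑ j : {j : Fin n // j ∈ Eᶜ}, (M i j.1).rank :=
          Finset.sum_congr rfl fun j _ => rfl
      _ = ∑ j ∈ Eᶜ, (M i j).rank :=
          (Finset.sum_subtype Eᶜ (fun _ => Iff.rfl) (fun j => (M i j).rank)).symm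
  · -- part (ii)
    set f : ∀ j : {j : Fin n // j ∈ Eᶜ},
        ((i : {i : Fin n // i ∈ E}) → Fin (m i.1) → F) →ₗ[F] (Fin (p j.1) → F) :=
      fun j => ∑ i : {i : Fin n // i ∈ E},
        ((M i.1 j.1).mulVecLin.comp (LinearMap.proj i)) with hf
    have hker : ∀ y : (i : {i : Fin n // i ∈ E}) → Fin (m i.1) → F,
        (∀ j, f j y = 0) → y = 0 := by
      intro y hy
      set x : (i' : Fin n) → Fin (m i') → F :=
        fun i' => if h : i' ∈ E then y ⟨i', h⟩ else 0 with hx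
      have hx0 : x = 0 := by
        apply hrec
        refine Prod.ext ?_ ?_
        · funext j
          have hne : j.1 ∉ E := Finset.mem_compl.mp j.2
          show x j.1 = (0 : (i' : Fin n) → Fin (m i') → F) j.1
          rw [hx]
          exact dif_neg hne
        · funext j
          show (∑ i', (M i' j.1).mulVec (x i'))
              = ∑ i', (M i' j.1).mulVec ((0 : (i' : Fin n) → Fin (m i') → F) i')
          have hsum : ∑ i', (M i' j.1).mulVec (x i')
              = ∑ i' ∈ E, (M i' j.1).mulVec (x i') := by
            symm
            apply Finset.sum_subset (Finset.subset_univ E)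
            intro i' _ hne
            simp [hx, dif_neg hne]
          have hsub : ∑ i' ∈ E, (M i' j.1).mulVec (x i')
              = ∑ i' : {i : Fin n // i ∈ E}, (M i'.1 j.1).mulVec (x i'.1) :=
            Finset.sum_subtype E (fun _ => Iff.rfl) (fun i' => (M i' j.1).mulVec (x i'))
          have hfy : ∑ i' : {i : Fin n // i ∈ E}, (M i'.1 j.1).mulVec (x i'.1) = f j y := by
            rw [hf]
            simp only [LinearMap.sum_apply, LinearMap.comp_apply, LinearMap.proj_apply,
              Matrix.mulVecLin_apply]
            refine Finset.sum_congr rfl fun i' _ => ?_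
            rw [hx]
            simp only []
            rw [dif_pos i'.2]
          have hR : (∑ i', (M i' j.1).mulVec ((0 : (i' : Fin n) → Fin (m i') → F) i')) = 0 := by
            simp
          rw [hsum, hsub, hfy, hy j, hR]
      funext i
      have : x i.1 = 0 := by rw [hx0]; rfl
      rw [hx] at this
      simp only [dif_pos i.2] at this
      exact this
    have key := aux_inj f hker
    have hdom : Module.finrank F ((i : {i : Fin n // i ∈ E}) → Fin (m i.1) → F)
        = ∑ i ∈ E, m i := by
      rw [Module.finrank_pi_fintype, Finset.sum_subtype E (fun _ => Iff.rfl) m]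
      exact Finset.sum_congr rfl fun i _ => Module.finrank_fin_fun F
    have hbound : ∀ j : {j : Fin n // j ∈ Eᶜ},
        Module.finrank F (LinearMap.range (f j)) ≤ min (p j.1) (∑ i ∈ E, (M i j.1).rank) := by
      intro j
      refine le_min ?_ ?_
      · calc Module.finrank F (LinearMap.range (f j))
            ≤ Module.finrank F (Fin (p j.1) → F) := Submodule.finrank_le _
          _ = p j.1 := Module.finrank_fin_fun F
      · have h1 := aux_pi (fun i : {i : Fin n // i ∈ E} => (M i.1 j.1).mulVecLin)
          (fun i => (M i.1 j.1).rank) (fun i => le_refl _)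
        calc Module.finrank F (LinearMap.range (f j))
            ≤ ∑ i : {i : Fin n // i ∈ E}, (M i.1 j.1).rank := by rw [hf]; exact h1
          _ = ∑ i ∈ E, (M i j.1).rank :=
              (Finset.sum_subtype E (fun _ => Iff.rfl) (fun i => (M i j.1).rank)).symm
    calc ∑ i ∈ E, m i
        = Module.finrank F ((i : {i : Fin n // i ∈ E}) → Fin (m i.1) → F) := hdom.symm
      _ ≤ ∑ j : {j : Fin n // j ∈ Eᶜ}, Module.finrank F (LinearMap.range (f j)) := key
      _ ≤ ∑ j : {j : Fin n // j ∈ Eᶜ}, min (p j.1) (∑ i ∈ E, (M i j.1).rank) :=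
          Finset.sum_le_sum fun j _ => hbound j
      _ = ∑ j ∈ Eᶜ, min (p j) (∑ i ∈ E, (M i j).rank) :=
          (Finset.sum_subtype Eᶜ (fun _ => Iff.rfl)
            (fun j => min (p j) (∑ i ∈ E, (M i j).rank))).symm
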